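/- A nonnegative rational number q/p with p and q relatively prime possesses a finite even continued fraction representation [c₁±, c₂±, …, c_k] (where all cᵢ are even integers, c₁ ≥ 0 and cᵢ > 0 for i ≥ 2) if and only if p + q is odd. -/

import Mathlib

/-- The value of the even continued fraction `c ± 1/(d₁ ± 1/( ⋯ ))`, where the
tail is the list of pairs (sign, term); `true` stands for `+`. -/
def ecfVal : ℤ → List (Bool × ℤ) → ℚ
  | c, [] => (c : ℚ)
  | c, (ε, d) :: t => (c : ℚ) + (if ε then 1 else -1) / ecfVal d t

/-- The key step: adjoining an even head `c` to a value `v` with `1 < v` and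
odd `num + den` again produces a value with odd `num + den`. -/
lemma ecf_step (c : ℤ) (hc : Even c) (e : Bool) (v : ℚ) (h1 : 1 < v)
    (hodd : Odd (v.num + (v.den : ℤ))) :
    Odd (((c : ℚ) + (if e then (1:ℚ) else -1) / v).num
        + ((((c : ℚ) + (if e then (1:ℚ) else -1) / v).den : ℤ)))
      ∧ (0 < c → 1 < (c : ℚ) + (if e then (1:ℚ) else -1) / v) := by
  set n : ℤ := v.num with hn
  set m : ℤ := (v.den : ℤ) with hm
  have hv0 : 0 < v := lt_trans one_pos h1
  have hnpos : 0 < n := Rat.num_pos.mpr hv0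
  have hmpos : 0 < m := by positivity
  have hred : Nat.Coprime v.num.natAbs v.den := v.reduced
  have hcopr : IsCoprime m n := by
    rw [Int.isCoprime_iff_gcd_eq_one]
    have : Int.gcd m n = Nat.gcd v.num.natAbs v.den := by
      rw [Int.gcd_comm]
      simp [Int.gcd, hn, hm]
    rw [this]; exact hred
  set E : ℤ := if e then 1 else -1 with hE
  have hEQ : (if e then (1:ℚ) else -1) = (E : ℚ) := by cases e <;> simp [hE]
  have hEcopr : IsCoprime (E * m) n := by
    cases e <;> simp [hE]
    · exact hcopr.neg_left
    · exact hcopr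
  have hcopr2 : IsCoprime (c * n + E * m) n := by
    have h := hEcopr.add_mul_right_left c
    rwa [show E * m + c * n = c * n + E * m by ring] at h
  have hgcd : Nat.Coprime (c * n + E * m).natAbs n.natAbs :=
    Int.isCoprime_iff_gcd_eq_one.mp hcopr2
  have hmQ0 : ((v.den : ℚ)) ≠ 0 := by positivity
  have key : ((v.num : ℚ)) = v * (v.den : ℚ) := by
    have h := Rat.mul_den_eq_num v
    exact_mod_cast h.symm
  have hveq : (c : ℚ) + (if e then (1:ℚ) else -1) / v
      = ((c * n + E * m : ℤ) : ℚ) / ((n : ℤ) : ℚ) := by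
    rw [hEQ]
    have hn0 : ((n : ℤ) : ℚ) ≠ 0 := by exact_mod_cast hnpos.ne'
    rw [eq_div_iff hn0, hn, hm]
    push_cast
    field_simp
    linear_combination (E : ℚ) * key
  have hnum : ((c : ℚ) + (if e then (1:ℚ) else -1) / v).num = c * n + E * m := by
    rw [hveq]; exact Rat.num_div_eq_of_coprime hnpos hgcd
  have hden : ((((c : ℚ) + (if e then (1:ℚ) else -1) / v).den : ℤ)) = n := by
    rw [hveq]; exact Rat.den_div_eq_of_coprime hnpos hgcd
  constructor
  · rw [hnum, hden]
    have hcn : Even (c * n) := hc.mul_right n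
    rw [Int.odd_iff] at hodd ⊢
    rw [Int.even_iff] at hcn
    have : E = 1 ∨ E = -1 := by cases e <;> simp [hE]
    rcases this with h | h <;> rw [h] <;> omega
  · intro hc0
    have hc2 : (2 : ℤ) ≤ c := by
      obtain ⟨k, hk⟩ := hc; omega
    have hc2' : (2 : ℚ) ≤ (c : ℚ) := by exact_mod_cast hc2
    have hinv1 : 1 / v < 1 := by
      rw [div_lt_one hv0]; exact h1
    have hinv0 : 0 < 1 / v := by positivity
    have hfact : (-1 : ℚ) / v = -(1 / v) := by ring
    cases e
    · simp only [Bool.false_eq_true, if_false, hfact]; linarith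
    · simp only [if_true]; linarith

/-- Forward direction: an even continued fraction has odd `num + den`,
and if the head is positive its value exceeds `1`. -/
lemma ecf_forward : ∀ (t : List (Bool × ℤ)) (c : ℤ), Even c →
    (∀ x ∈ t, Even x.2 ∧ 0 < x.2) →
    Odd ((ecfVal c t).num + ((ecfVal c t).den : ℤ)) ∧ (0 < c → 1 < ecfVal c t) := by
  intro t
  induction t with
  | nil =>
    intro c hc _
    simp only [ecfVal]
    constructor
    · rw [Rat.num_intCast, Rat.den_intCast]
      rw [Int.odd_iff]
      obtain ⟨k, hk⟩ := hc
      omega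
    · intro hc0
      have : (2:ℤ) ≤ c := by obtain ⟨k, hk⟩ := hc; omega
      have : (2:ℚ) ≤ (c:ℚ) := by exact_mod_cast this
      linarith
  | cons hd tl ih =>
    intro c hc ht
    obtain ⟨e, d⟩ := hd
    have hhd := ht (e, d) (by simp)
    have htl : ∀ x ∈ tl, Even x.2 ∧ 0 < x.2 := fun x hx => ht x (by simp [hx])
    obtain ⟨hodd', h1'⟩ := ih d hhd.1 htl
    have h1 : 1 < ecfVal d tl := h1' hhd.2
    have := ecf_step c hc e (ecfVal d tl) h1 hodd'
    simpa [ecfVal] using this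

/-- Backward direction: construction of the even continued fraction. -/
lemma ecf_exists : ∀ (b : ℕ), ∀ a : ℕ, 0 < b → Nat.Coprime a b → Odd (a + b) →
    ∃ (d : ℤ) (t : List (Bool × ℤ)), Even d ∧ 0 ≤ d ∧ (b < a → 0 < d) ∧
      (∀ x ∈ t, Even x.2 ∧ 0 < x.2) ∧ ecfVal d t = (a : ℚ) / (b : ℚ) := by
  intro b
  induction b using Nat.strong_induction_on with
  | _ b IH =>
    intro a hb hco hodd
    rcases (Nat.succ_le_of_lt hb).eq_or_lt with hb1 | hb2
    · -- b = 1
      have hb1 : b = 1 := hb1.symm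
      subst hb1
      have ha : Even a := by
        rw [Nat.odd_iff] at hodd; rw [Nat.even_iff]; omega
      refine ⟨(a : ℤ), [], ?_, by positivity, ?_, by simp, by simp [ecfVal]⟩
      · exact_mod_cast ha
      · intro h
        have : 0 < a := by omega
        exact_mod_cast this
    · -- 2 ≤ b
      have ha0 : a ≠ 0 := by
        rintro rfl
        rw [Nat.coprime_zero_left] at hco
        omega
      set m := a / b with hm
      set s := a % b with hs
      have hdm : b * m + s = a := Nat.div_add_mod a b
      have hslt : s < b := Nat.mod_lt a hb
      have hs0 : s ≠ 0 := by
        intro h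
        have hbd : b ∣ a := Nat.dvd_of_mod_eq_zero h
        have : b ∣ Nat.gcd a b := Nat.dvd_gcd hbd dvd_rfl
        rw [hco, Nat.dvd_one] at this
        omega
      have hcbs : Nat.Coprime b s := by
        have h1 : Nat.gcd b a = Nat.gcd (a % b) b := Nat.gcd_rec b a
        have h2 : Nat.gcd b a = 1 := Nat.coprime_comm.mp hco
        have : Nat.gcd s b = 1 := by rw [hs, ← h1, h2]
        exact Nat.coprime_comm.mp this
      have hacast : (a : ℚ) = (b : ℚ) * (m : ℚ) + (s : ℚ) := by exact_mod_cast hdm.symm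
      have hbQ : (b : ℚ) ≠ 0 := by positivity
      have hsQ : (s : ℚ) ≠ 0 := by exact_mod_cast hs0
      rcases Nat.even_or_odd m with hme | hmo
      · -- m even: a/b = m + 1/(b/s)
        have hobs : Odd (b + s) := by
          obtain ⟨k, hk⟩ := hme.mul_left b
          rw [Nat.odd_iff] at hodd ⊢
          omega
        obtain ⟨d', t', hd'e, _, hd'pos, ht', hval'⟩ := IH s hslt b (Nat.pos_of_ne_zero hs0) hcbs hobs
        have hd'0 : 0 < d' := hd'pos hslt
        refine ⟨(m : ℤ), (true, d') :: t', ?_, by positivity, ?_, ?_, ?_⟩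
        · exact_mod_cast hme
        · intro hba
          have : 1 ≤ m := (Nat.one_le_div_iff hb).mpr hba.le
          exact_mod_cast this
        · intro x hx
          rcases List.mem_cons.mp hx with h | h
          · rw [h]; exact ⟨hd'e, hd'0⟩
          · exact ht' x h
        · simp only [ecfVal, hval', if_true]
          rw [hacast]
          push_cast
          field_simp
      · -- m odd: a/b = (m+1) - 1/(b/(b-s))
        have hobs : Odd (b + (b - s)) := by
          obtain ⟨k, hk⟩ := (Odd.add_one hmo).mul_left b
          have hbm : b * m + b = 2 * k := by rw [two_mul, ← hk]; ring
          rw [Nat.odd_iff] at hodd ⊢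
          omega
        have hbs0 : 0 < b - s := by omega
        have hbslt : b - s < b := by omega
        have hcbbs : Nat.Coprime b (b - s) :=
          (Nat.coprime_self_sub_right hslt.le).mpr hcbs
        obtain ⟨d', t', hd'e, _, hd'pos, ht', hval'⟩ := IH (b - s) hbslt b hbs0 hcbbs hobs
        have hd'0 : 0 < d' := hd'pos hbslt
        refine ⟨(m : ℤ) + 1, (false, d') :: t', ?_, by positivity, ?_, ?_, ?_⟩
        · rw [Int.even_add_one]
          simpa [Int.not_even_iff_odd] using (Int.odd_coe_nat m).mpr hmo
        · intro _; positivity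
        · intro x hx
          rcases List.mem_cons.mp hx with h | h
          · rw [h]; exact ⟨hd'e, hd'0⟩
          · exact ht' x h
        · simp only [ecfVal, hval', Bool.false_eq_true, if_false]
          have hbsQ : ((b - s : ℕ) : ℚ) = (b : ℚ) - (s : ℚ) := by
            push_cast [Nat.cast_sub hslt.le]; ring
          have hbsne : (b : ℚ) - (s : ℚ) ≠ 0 := by
            have h' : (s : ℚ) < (b : ℚ) := by exact_mod_cast hslt
            linarith
          rw [hbsQ, hacast]
          push_cast
          field_simp
          ring

theorem even_continued_fraction_exists_iff (p q : ℕ) (hp : 0 < p)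
    (hco : Nat.Coprime p q) :
    (∃ (c : ℤ) (t : List (Bool × ℤ)),
        Even c ∧ 0 ≤ c ∧ (∀ x ∈ t, Even x.2 ∧ 0 < x.2) ∧
        ecfVal c t = (q : ℚ) / (p : ℚ)) ↔ Odd (p + q) := by
  constructor
  · rintro ⟨c, t, hce, _, ht, hval⟩
    have hmain := (ecf_forward t c hce ht).1
    rw [hval] at hmain
    have hppos : (0 : ℤ) < (p : ℤ) := by exact_mod_cast hp
    have hgcd : Nat.Coprime ((q : ℤ)).natAbs ((p : ℤ)).natAbs := by
      simpa using hco.symm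
    have hq' : ((q : ℚ) / (p : ℚ)).num = (q : ℤ) := by
      have := Rat.num_div_eq_of_coprime hppos hgcd
      simpa using this
    have hp' : ((((q : ℚ) / (p : ℚ)).den : ℤ)) = (p : ℤ) := by
      have := Rat.den_div_eq_of_coprime hppos hgcd
      simpa using this
    rw [hq', hp'] at hmain
    have : Odd ((q : ℤ) + (p : ℤ)) := hmain
    rw [Int.odd_iff] at this
    rw [Nat.odd_iff]
    omega
  · intro hodd
    have hodd' : Odd (q + p) := by rwa [Nat.add_comm]
    obtain ⟨d, t, hde, hd0, _, ht, hval⟩ := ecf_exists p q hp hco.symm hodd'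
    exact ⟨d, t, hde, hd0, ht, hval⟩
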